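/- Let b = 5·2^n with n ≥ 2. Then the least L ≥ 0 such that both coordinates of K^L((9, 1)) are divisible by 2^n equals 2n; moreover, K^{2n}((9, 1)) = (2·2^n, 0) if n is even, and K^{2n}((9, 1)) = (4·2^n, 2·2^n) if n is odd. -/
import Mathlib


/-- The four base-`b` digits of `x` (viewed as a 4-digit string with leading
zeros allowed), sorted in decreasing order. -/
def sortedDigits (b x : ℕ) : List ℕ :=
  List.insertionSort (· ≥ ·) [x % b, x / b % b, x / b ^ 2 % b, x / b ^ 3 % b]

/-- The 4-digit base-`b` Kaprekar function `K_b(x) = D - A`. -/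
def Kap (b x : ℕ) : ℕ :=
  let l := sortedDigits b x
  (l[0]! * b ^ 3 + l[1]! * b ^ 2 + l[2]! * b + l[3]!) -
    (l[3]! * b ^ 3 + l[2]! * b ^ 2 + l[1]! * b + l[0]!)

/-- The difference pair `(a₃ - a₀, a₂ - a₁)` of a 4-digit base-`b` input. -/
def diffPair (b x : ℕ) : ℕ × ℕ :=
  let l := sortedDigits b x
  (l[0]! - l[3]!, l[1]! - l[2]!)

/-- `S_b`: the set of 4-digit base-`b` inputs whose sequence of Kaprekar
iterates is eventually constant and nonzero. -/
def KapSet (b : ℕ) : Set ℕ :=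
  {x | x < b ^ 4 ∧
    ∃ t, (∀ s, t ≤ s → (Kap b)^[s] x = (Kap b)^[t] x) ∧ (Kap b)^[t] x ≠ 0}

/-- Arrange the two coordinates of a pair in decreasing order. -/
def sort2 (p : ℕ × ℕ) : ℕ × ℕ := (max p.1 p.2, min p.1 p.2)

/-- A base-`b` difference pair: `b - 1 ≥ d ≥ d' ≥ 0`. -/
def IsDiffPair (b : ℕ) (p : ℕ × ℕ) : Prop := p.2 ≤ p.1 ∧ p.1 ≤ b - 1

/-- The Kaprekar map on base-`b` difference pairs. -/
def Kpair (b : ℕ) (p : ℕ × ℕ) : ℕ × ℕ :=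
  if p.1 = 0 ∧ p.2 = 0 then (0, 0)
  else if p.2 = 0 then
    -- type (c)
    sort2 (p.1 - 1, b - p.1)
  else if p.1 = p.2 ∨ p.1 + p.2 = b then
    -- type (b)
    sort2 ((2 * (p.1 : ℤ) - ((b : ℤ) - 1)).natAbs,
           (2 * (p.1 : ℤ) - ((b : ℤ) + 1)).natAbs)
  else
    -- type (a)
    sort2 ((2 * (p.1 : ℤ) - (b : ℤ)).natAbs, (2 * (p.2 : ℤ) - (b : ℤ)).natAbs)

section KaprekarHelpers

private lemma kp_eval_a (b d d' : ℕ) (h0 : ¬(d = 0 ∧ d' = 0)) (h1 : d' ≠ 0)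
    (h2 : ¬(d = d' ∨ d + d' = b)) :
    Kpair b (d, d') = sort2 ((2 * (d:ℤ) - b).natAbs, (2 * (d':ℤ) - b).natAbs) := by
  simp only [Kpair]
  split_ifs <;> simp_all

private lemma kp_eval_b (b d d' : ℕ) (h0 : ¬(d = 0 ∧ d' = 0)) (h1 : d' ≠ 0)
    (h2 : d = d' ∨ d + d' = b) :
    Kpair b (d, d') = sort2 ((2 * (d:ℤ) - ((b:ℤ) - 1)).natAbs,
      (2 * (d:ℤ) - ((b:ℤ) + 1)).natAbs) := by
  simp only [Kpair]
  split_ifs <;> simp_all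

private lemma kp_91 (b : ℕ) (hb : 20 ≤ b) : Kpair b (9, 1) = (b - 2, b - 18) := by
  rw [kp_eval_a b 9 1 (by omega) (by omega) (by omega)]
  simp only [sort2, Prod.mk.injEq]
  constructor <;> omega

private lemma step1 (b x : ℕ) (hx : 1 ≤ x) (h : 18 * x < b) :
    Kpair b (b - x, b - 9 * x) = (b - 2 * x, b - 18 * x) := by
  rw [kp_eval_a b _ _ (by omega) (by omega) (by omega)]
  simp only [sort2, Prod.mk.injEq]
  constructor <;> omega

private lemma stepb (b x : ℕ) (hb : b = 10 * x) (hx : 1 ≤ x) :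
    Kpair b (9 * x, x) = (8 * x + 1, 8 * x - 1) := by
  rw [kp_eval_b b _ _ (by omega) (by omega) (by omega)]
  simp only [sort2, Prod.mk.injEq]
  constructor <;> omega

private lemma step0 (c : ℕ) (hc : 1 ≤ c) :
    Kpair (5 * c) (4 * c + 1, 4 * c - 1) = (3 * c + 2, 3 * c - 2) := by
  rw [kp_eval_a _ _ _ (by omega) (by omega) (by omega)]
  simp only [sort2, Prod.mk.injEq]
  constructor <;> omega

private lemma step_odd (c y : ℕ) (hy : 1 ≤ y) (h2y : 2 * y ≤ c) :
    Kpair (5 * c) (3 * c + y, 3 * c - y) = (c + 2 * y, c - 2 * y) := by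
  rw [kp_eval_a _ _ _ (by omega) (by omega) (by omega)]
  simp only [sort2, Prod.mk.injEq]
  constructor <;> omega

private lemma step_even (c y : ℕ) (hy : 1 ≤ y) (hyc : y < c) :
    Kpair (5 * c) (c + y, c - y) = (3 * c + 2 * y, 3 * c - 2 * y) := by
  rw [kp_eval_a _ _ _ (by omega) (by omega) (by omega)]
  simp only [sort2, Prod.mk.injEq]
  constructor <;> omega

private lemma phase1 (n b : ℕ) (hn : 2 ≤ n) (hb : b = 5 * 2 ^ n) :
    ∀ t, 1 ≤ t → t ≤ n - 1 →
      (Kpair b)^[t] (9, 1) = (b - 2 ^ t, b - 9 * 2 ^ t) := by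
  have hb20 : 20 ≤ b := by
    have : 2 ^ 2 ≤ 2 ^ n := Nat.pow_le_pow_right (by norm_num) hn
    omega
  intro t
  induction t with
  | zero => omega
  | succ t ih =>
    intro _ ht
    rcases Nat.eq_zero_or_pos t with h0 | h1
    · subst h0
      simpa using kp_91 b hb20
    · rw [Function.iterate_succ_apply', ih h1 (by omega)]
      have hlt : 18 * 2 ^ t < b := by
        have h9 : 9 * 2 ^ (t + 1) ≤ 9 * 2 ^ (n - 1) :=
          Nat.mul_le_mul_left _ (Nat.pow_le_pow_right (by norm_num) (by omega))
        have h2 : (2:ℕ) ^ n = 2 * 2 ^ (n - 1) := by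
          conv_lhs => rw [show n = (n - 1) + 1 by omega]
          rw [pow_succ]
          ring
        rw [pow_succ] at h9
        omega
      rw [step1 b (2 ^ t) Nat.one_le_two_pow hlt, Prod.mk.injEq, pow_succ]
      omega

private lemma phase_n (n b : ℕ) (hn : 2 ≤ n) (hb : b = 5 * 2 ^ n) :
    (Kpair b)^[n] (9, 1) = (4 * 2 ^ n + 1, 4 * 2 ^ n - 1) := by
  have hpow : (2:ℕ) ^ n = 2 * 2 ^ (n - 1) := by
    conv_lhs => rw [show n = (n - 1) + 1 by omega]
    rw [pow_succ]; ring
  have h1 : (Kpair b)^[n - 1] (9, 1) = (9 * 2 ^ (n - 1), 2 ^ (n - 1)) := by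
    rw [phase1 n b hn hb (n - 1) (by omega) le_rfl, Prod.mk.injEq]
    omega
  conv_lhs => rw [show n = (n - 1) + 1 by omega]
  rw [Function.iterate_succ_apply', h1,
    stepb b (2 ^ (n - 1)) (by omega) Nat.one_le_two_pow, Prod.mk.injEq]
  omega

private lemma phase2 (n b : ℕ) (hn : 2 ≤ n) (hb : b = 5 * 2 ^ n) :
    ∀ k, 1 ≤ k → k ≤ n →
      (Kpair b)^[n + k] (9, 1) =
        if Odd k then (3 * 2 ^ n + 2 ^ k, 3 * 2 ^ n - 2 ^ k)
        else (2 ^ n + 2 ^ k, 2 ^ n - 2 ^ k) := by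
  intro k
  induction k with
  | zero => omega
  | succ k ih =>
    intro _ hk
    rcases Nat.eq_zero_or_pos k with h0 | h1
    · subst h0
      rw [show n + 1 = n + 1 from rfl, Function.iterate_succ_apply',
        phase_n n b hn hb, hb, step0 (2 ^ n) Nat.one_le_two_pow]
      simp
    · have hkn : k ≤ n := by omega
      have hpow1 : (2:ℕ) ^ (k + 1) = 2 * 2 ^ k := by rw [pow_succ]; ring
      have hklt : 2 * 2 ^ k ≤ 2 ^ n := by
        rw [← hpow1]
        exact Nat.pow_le_pow_right (by norm_num) (by omega)
      have hy1 : 1 ≤ 2 ^ k := Nat.one_le_two_pow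
      have hylt : 2 ^ k < 2 ^ n := by omega
      rw [show n + (k + 1) = (n + k) + 1 by omega, Function.iterate_succ_apply',
        ih h1 hkn]
      rcases Nat.even_or_odd k with he | ho
      · rw [if_neg (by simpa using he), hb,
          step_even (2 ^ n) (2 ^ k) Nat.one_le_two_pow hylt,
          if_pos (by simpa using Even.add_one he), Prod.mk.injEq]
        omega
      · rw [if_pos ho, hb, step_odd (2 ^ n) (2 ^ k) Nat.one_le_two_pow hklt,
          if_neg (by simpa using Odd.add_one ho), Prod.mk.injEq]
        omega

end KaprekarHelpers

/-- for `b = 5·2^n`, `n ≥ 2`, the pair `(9, 1)` first reaches a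
pair with both coordinates divisible by `2^n` after exactly `2n` steps, landing
on `(2·2^n, 0)` for even `n` and `(4·2^n, 2·2^n)` for odd `n`. -/
theorem kaprekar_nine_one (n b : ℕ) (hn : 2 ≤ n) (hb : b = 5 * 2 ^ n) :
    IsLeast {L : ℕ | 2 ^ n ∣ ((Kpair b)^[L] (9, 1)).1 ∧
                     2 ^ n ∣ ((Kpair b)^[L] (9, 1)).2} (2 * n) ∧
    (Even n → (Kpair b)^[2 * n] (9, 1) = (2 * 2 ^ n, 0)) ∧
    (Odd n → (Kpair b)^[2 * n] (9, 1) = (4 * 2 ^ n, 2 * 2 ^ n)) := by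
  have h4 : 4 ≤ 2 ^ n := by
    calc (4:ℕ) = 2 ^ 2 := by norm_num
    _ ≤ 2 ^ n := Nat.pow_le_pow_right (by norm_num) hn
  have hfin := phase2 n b hn hb n (by omega) le_rfl
  rw [show n + n = 2 * n by ring] at hfin
  have heven : Even n → (Kpair b)^[2 * n] (9, 1) = (2 * 2 ^ n, 0) := by
    intro he
    rw [hfin, if_neg (by simpa using he), Prod.mk.injEq]
    omega
  have hodd : Odd n → (Kpair b)^[2 * n] (9, 1) = (4 * 2 ^ n, 2 * 2 ^ n) := by
    intro ho
    rw [hfin, if_pos ho, Prod.mk.injEq]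
    omega
  refine ⟨⟨?_, ?_⟩, heven, hodd⟩
  · rcases Nat.even_or_odd n with he | ho
    · rw [Set.mem_setOf_eq, heven he]
      exact ⟨⟨2, by ring⟩, dvd_zero _⟩
    · rw [Set.mem_setOf_eq, hodd ho]
      exact ⟨⟨4, by ring⟩, ⟨2, by ring⟩⟩
  · intro L hL
    rw [Set.mem_setOf_eq] at hL
    by_contra hcon
    push_neg at hcon
    have hdvd2 : (2:ℕ) ∣ 2 ^ n := dvd_pow_self 2 (by omega)
    -- case split on where L lies
    rcases Nat.eq_zero_or_pos L with h0 | hL1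
    · subst h0
      simp only [Function.iterate_zero, id_eq] at hL
      have := dvd_trans hdvd2 hL.1
      omega
    rcases Nat.lt_or_ge L n with hLn | hLn
    · -- 1 ≤ L ≤ n - 1
      have := hL.1
      rw [phase1 n b hn hb L hL1 (by omega)] at this
      simp only at this
      have hble : 2 ^ L ≤ b := by
        have : 2 ^ L ≤ 2 ^ n := Nat.pow_le_pow_right (by norm_num) (by omega)
        omega
      have hdb : 2 ^ n ∣ b := ⟨5, by rw [hb]; ring⟩
      have hdx : (2:ℕ) ^ n ∣ 2 ^ L := by
        have := Nat.dvd_sub hdb this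
        rwa [Nat.sub_sub_self hble] at this
      have := (Nat.pow_dvd_pow_iff_le_right (by norm_num : 1 < 2)).mp hdx
      omega
    rcases Nat.eq_or_lt_of_le hLn with hLeq | hLgt
    · -- L = n
      have := hL.1
      rw [← hLeq, phase_n n b hn hb] at this
      simp only at this
      have h1 : (2:ℕ) ^ n ∣ 1 := by
        have h4d : (2:ℕ) ^ n ∣ 4 * 2 ^ n := ⟨4, by ring⟩
        have := Nat.dvd_sub this h4d
        simpa using this
      have := Nat.le_of_dvd one_pos h1
      omega
    · -- n < L < 2n
      set k := L - n with hk
      have hk1 : 1 ≤ k := by omega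
      have hkn : k ≤ n := by omega
      have := hL.1
      rw [show L = n + k by omega, phase2 n b hn hb k hk1 hkn] at this
      have hdx : (2:ℕ) ^ n ∣ 2 ^ k := by
        rcases Nat.even_or_odd k with he | ho
        · rw [if_neg (by simpa using he)] at this
          simp only at this
          have hcd : (2:ℕ) ^ n ∣ 2 ^ n := dvd_rfl
          have := Nat.dvd_sub this hcd
          simpa using this
        · rw [if_pos ho] at this
          simp only at this
          have hcd : (2:ℕ) ^ n ∣ 3 * 2 ^ n := ⟨3, by ring⟩
          have := Nat.dvd_sub this hcd
          simpa using this
      have := (Nat.pow_dvd_pow_iff_le_right (by norm_num : 1 < 2)).mp hdx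
      omega
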